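/- arXiv:1804.01833 — 2 statements merged into one kernel-verified Lean document; each statement's English description precedes it below -/
import Mathlib

section
/- On ℓ²(ℤ) with U e_k = e_{k+1}, S₂ e_k = e_{2k}, S₁ = U S₂, define S̃₁ = S₂² S₁* + S₁ S₂ S₂* and S̃₂ = S₂ S₁ S₁* + S₁² S₂* (the images of the generators under the endomorphism ρ₁₄ of O₂), and set Ũ = U^{−2}. Then: (a) S̃₁ e_{2k} = e_{4k+1}, S̃₁ e_{2k+1} = e_{4k}, S̃₂ e_{2k} = e_{4k+3}, S̃₂ e_{2k+1} = e_{4k+2} for all k ∈ ℤ [equivalently as stated via the relevant index computations]; (b) Ũ S̃₂ = S̃₁ and S̃₂ Ũ = Ũ S̃₁. Hence (S̃₂, Ũ) satisfy the defining relations of Q₂: S̃₂ Ũ = Ũ² S̃₂ and S̃₂ S̃₂* + Ũ S̃₂ S̃₂* Ũ* = 1. -/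
open ContinuousLinearMap
noncomputable def e (k : ℤ) : lp (fun _ : ℤ => ℂ) 2 := lp.single 2 k 1

lemma inner_e (k : ℤ) (x : lp (fun _ : ℤ => ℂ) 2) : (inner ℂ (e k) x : ℂ) = x k := by
  rw [e, lp.inner_single_left]; simp [RCLike.inner_apply]

lemma e_apply (k j : ℤ) : (e k : ∀ _ : ℤ, ℂ) j = if j = k then 1 else 0 := by
  simp [e, lp.single_apply, Pi.single_apply]

lemma ext_e {A B : lp (fun _ : ℤ => ℂ) 2 →L[ℂ] lp (fun _ : ℤ => ℂ) 2}
    (h : ∀ k, A (e k) = B (e k)) : A = B := by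
  refine ContinuousLinearMap.ext fun x => ?_
  have hx : HasSum (fun k : ℤ => lp.single 2 k (x k)) x := lp.hasSum_single ENNReal.ofNat_ne_top x
  have hxs : ∀ k : ℤ, lp.single 2 k (x k) = x k • e k := by
    intro k; rw [e, ← lp.single_smul]; norm_num
  have hA := hx.mapL A
  have hB := hx.mapL B
  have heq : (fun k : ℤ => A (lp.single 2 k (x k))) = fun k => B (lp.single 2 k (x k)) := by
    funext k; rw [hxs k, map_smul, map_smul, h k]
  exact hA.unique (heq ▸ hB)

lemma adj_hit {A : lp (fun _ : ℤ => ℂ) 2 →L[ℂ] lp (fun _ : ℤ => ℂ) 2} {g : ℤ → ℤ}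
    (hg : Function.Injective g) (hA : ∀ k, A (e k) = e (g k)) (k : ℤ) :
    adjoint A (e (g k)) = e k := by
  refine lp.ext (funext fun j => ?_)
  have h1 : (adjoint A (e (g k)) : ∀ _ : ℤ, ℂ) j = inner ℂ (e j) (adjoint A (e (g k))) :=
    (inner_e _ _).symm
  rw [h1, ContinuousLinearMap.adjoint_inner_right, hA, inner_e, e_apply, e_apply]
  simp [hg.eq_iff]

lemma adj_miss {A : lp (fun _ : ℤ => ℂ) 2 →L[ℂ] lp (fun _ : ℤ => ℂ) 2} {g : ℤ → ℤ}
    (hA : ∀ k, A (e k) = e (g k)) (m : ℤ) (hm : ∀ k, g k ≠ m) :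
    adjoint A (e m) = 0 := by
  refine lp.ext (funext fun j => ?_)
  have h1 : (adjoint A (e m) : ∀ _ : ℤ, ℂ) j = inner ℂ (e j) (adjoint A (e m)) :=
    (inner_e _ _).symm
  rw [h1, ContinuousLinearMap.adjoint_inner_right, hA, inner_e, e_apply]
  simp [hm j]

def g14 (k : ℤ) : ℤ := if k % 2 = 0 then 2 * k + 3 else 2 * k

lemma g14_inj : Function.Injective g14 := by
  intro a b h; unfold g14 at h; split_ifs at h <;> omega

lemma g14_even (m : ℤ) : g14 (2 * m) = 4 * m + 3 := by
  unfold g14; split_ifs with h <;> omega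

lemma g14_odd (m : ℤ) : g14 (2 * m + 1) = 4 * m + 2 := by
  unfold g14; split_ifs with h <;> omega

/-- The quadratic permutation endomorphism `ρ₁₄` of `O₂` extends to `Q₂` with
`ρ₁₄(U) = U^{-2}`: in the canonical representation on `ℓ²(ℤ)`, with
`S̃₁ = S₂² S₁* + S₁ S₂ S₂*`, `S̃₂ = S₂ S₁ S₁* + S₁² S₂*` and `Ũ = U^{-2}`
(`Ũ e_k = e_{k-2}`), one has the basis formulas
`S̃₁ e_{2k} = e_{4k+1}`, `S̃₁ e_{2k+1} = e_{4k}`, `S̃₂ e_{2k} = e_{4k+3}`,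
`S̃₂ e_{2k+1} = e_{4k+2}`, the relations `Ũ S̃₂ = S̃₁`, `S̃₂ Ũ = Ũ S̃₁`, and hence
the defining relations of `Q₂`: `S̃₂ Ũ = Ũ² S̃₂` and `S̃₂ S̃₂* + Ũ S̃₂ S̃₂* Ũ* = 1`. -/
theorem stmt17 (U S₂ S₁ St₁ St₂ Ut : lp (fun _ : ℤ => ℂ) 2 →L[ℂ] lp (fun _ : ℤ => ℂ) 2)
    (hU : ∀ k : ℤ, U (e k) = e (k + 1))
    (hS₂ : ∀ k : ℤ, S₂ (e k) = e (2 * k))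
    (hS₁ : S₁ = U * S₂)
    (hSt₁ : St₁ = S₂ ^ 2 * adjoint S₁ + S₁ * S₂ * adjoint S₂)
    (hSt₂ : St₂ = S₂ * S₁ * adjoint S₁ + S₁ ^ 2 * adjoint S₂)
    (hUt : ∀ k : ℤ, Ut (e k) = e (k - 2)) :
    (∀ k : ℤ, St₁ (e (2 * k)) = e (4 * k + 1) ∧ St₁ (e (2 * k + 1)) = e (4 * k) ∧
      St₂ (e (2 * k)) = e (4 * k + 3) ∧ St₂ (e (2 * k + 1)) = e (4 * k + 2)) ∧
    Ut * St₂ = St₁ ∧ St₂ * Ut = Ut * St₁ ∧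
    St₂ * Ut = Ut ^ 2 * St₂ ∧
    St₂ * adjoint St₂ + Ut * (St₂ * adjoint St₂) * adjoint Ut = 1 := by
  have hS₁' : ∀ k : ℤ, S₁ (e k) = e (2 * k + 1) := by
    intro k; rw [hS₁, ContinuousLinearMap.mul_apply, hS₂, hU]
  -- adjoints of S₁, S₂
  have aS₂0 : ∀ k : ℤ, adjoint S₂ (e (2 * k)) = e k :=
    adj_hit (g := fun k => 2 * k) (fun a b h => by dsimp only at h; omega) hS₂
  have aS₂1 : ∀ k : ℤ, adjoint S₂ (e (2 * k + 1)) = 0 := fun k =>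
    adj_miss (g := fun k => 2 * k) hS₂ _ (fun j => by omega)
  have aS₁1 : ∀ k : ℤ, adjoint S₁ (e (2 * k + 1)) = e k :=
    adj_hit (g := fun k => 2 * k + 1) (fun a b h => by dsimp only at h; omega) hS₁'
  have aS₁0 : ∀ k : ℤ, adjoint S₁ (e (2 * k)) = 0 := fun k =>
    adj_miss (g := fun k => 2 * k + 1) hS₁' _ (fun j => by omega)
  -- basis formulas
  have ht1e : ∀ k : ℤ, St₁ (e (2 * k)) = e (4 * k + 1) := by
    intro k
    rw [hSt₁]
    simp only [ContinuousLinearMap.add_apply, ContinuousLinearMap.mul_apply, pow_two,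
      aS₁0, aS₂0, map_zero, zero_add, hS₂, hS₁']
    congr 1; ring
  have ht1o : ∀ k : ℤ, St₁ (e (2 * k + 1)) = e (4 * k) := by
    intro k
    rw [hSt₁]
    simp only [ContinuousLinearMap.add_apply, ContinuousLinearMap.mul_apply, pow_two,
      aS₁1, aS₂1, map_zero, add_zero, hS₂]
    congr 1; ring
  have ht2e : ∀ k : ℤ, St₂ (e (2 * k)) = e (4 * k + 3) := by
    intro k
    rw [hSt₂]
    simp only [ContinuousLinearMap.add_apply, ContinuousLinearMap.mul_apply, pow_two,
      aS₁0, aS₂0, map_zero, zero_add, hS₁']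
    congr 1; ring
  have ht2o : ∀ k : ℤ, St₂ (e (2 * k + 1)) = e (4 * k + 2) := by
    intro k
    rw [hSt₂]
    simp only [ContinuousLinearMap.add_apply, ContinuousLinearMap.mul_apply, pow_two,
      aS₁1, aS₂1, map_zero, add_zero, hS₁', hS₂]
    congr 1; ring
  -- St₂ on all basis vectors via g14
  have ht2g : ∀ k : ℤ, St₂ (e k) = e (g14 k) := by
    intro k
    obtain ⟨m, hm | hm⟩ : ∃ m : ℤ, k = 2 * m ∨ k = 2 * m + 1 := ⟨k / 2, by omega⟩
    · subst hm; rw [ht2e, g14_even]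
    · subst hm; rw [ht2o, g14_odd]
  have aT2 : ∀ k : ℤ, adjoint St₂ (e (4 * k + 2)) = e (2 * k + 1) := by
    intro k
    have h := adj_hit g14_inj ht2g (2 * k + 1)
    rwa [g14_odd] at h
  have aT3 : ∀ k : ℤ, adjoint St₂ (e (4 * k + 3)) = e (2 * k) := by
    intro k
    have h := adj_hit g14_inj ht2g (2 * k)
    rwa [g14_even] at h
  have aT0 : ∀ k : ℤ, adjoint St₂ (e (4 * k)) = 0 := fun k =>
    adj_miss ht2g _ (fun j => by unfold g14; split_ifs <;> omega)
  have aT1 : ∀ k : ℤ, adjoint St₂ (e (4 * k + 1)) = 0 := fun k =>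
    adj_miss ht2g _ (fun j => by unfold g14; split_ifs <;> omega)
  have aUt : ∀ m : ℤ, adjoint Ut (e m) = e (m + 2) := by
    intro m
    have h := adj_hit (g := fun k => k - 2) (fun a b h => by dsimp only at h; omega) hUt (m + 2)
    simpa using h
  -- relation 2
  have h2 : Ut * St₂ = St₁ := by
    refine ext_e fun k => ?_
    obtain ⟨m, hm | hm⟩ : ∃ m : ℤ, k = 2 * m ∨ k = 2 * m + 1 := ⟨k / 2, by omega⟩
    · subst hm
      rw [ContinuousLinearMap.mul_apply, ht2e, hUt, ht1e]
      congr 1; ring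
    · subst hm
      rw [ContinuousLinearMap.mul_apply, ht2o, hUt, ht1o]
      congr 1; ring
  -- relation 3
  have h3 : St₂ * Ut = Ut * St₁ := by
    refine ext_e fun k => ?_
    obtain ⟨m, hm | hm⟩ : ∃ m : ℤ, k = 2 * m ∨ k = 2 * m + 1 := ⟨k / 2, by omega⟩
    · subst hm
      rw [ContinuousLinearMap.mul_apply, ContinuousLinearMap.mul_apply, hUt,
        show (2 * m - 2 : ℤ) = 2 * (m - 1) from by ring, ht2e, ht1e, hUt]
      congr 1; ring
    · subst hm
      rw [ContinuousLinearMap.mul_apply, ContinuousLinearMap.mul_apply, hUt,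
        show (2 * m + 1 - 2 : ℤ) = 2 * (m - 1) + 1 from by ring, ht2o, ht1o, hUt]
      congr 1; ring
  -- relation 4
  have h4 : St₂ * Ut = Ut ^ 2 * St₂ := by
    rw [pow_two, mul_assoc, h2]; exact h3
  -- relation 5
  have h5 : St₂ * adjoint St₂ + Ut * (St₂ * adjoint St₂) * adjoint Ut = 1 := by
    refine ext_e fun k => ?_
    obtain ⟨m, hm | hm | hm | hm⟩ :
        ∃ m : ℤ, k = 4 * m ∨ k = 4 * m + 1 ∨ k = 4 * m + 2 ∨ k = 4 * m + 3 := ⟨k / 4, by omega⟩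
    · subst hm
      simp only [ContinuousLinearMap.add_apply, ContinuousLinearMap.mul_apply,
        ContinuousLinearMap.one_apply, aT0, map_zero, zero_add, aUt, aT2, ht2o, hUt]
      congr 1; ring
    · subst hm
      simp only [ContinuousLinearMap.add_apply, ContinuousLinearMap.mul_apply,
        ContinuousLinearMap.one_apply, aT1, map_zero, zero_add, aUt]
      rw [show (4 * m + 1 + 2 : ℤ) = 4 * m + 3 from by ring, aT3, ht2e, hUt]
      congr 1; ring
    · subst hm
      simp only [ContinuousLinearMap.add_apply, ContinuousLinearMap.mul_apply,
        ContinuousLinearMap.one_apply, aUt]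
      rw [show (4 * m + 2 + 2 : ℤ) = 4 * (m + 1) from by ring, aT0, aT2, ht2o]
      simp only [map_zero, add_zero]
    · subst hm
      simp only [ContinuousLinearMap.add_apply, ContinuousLinearMap.mul_apply,
        ContinuousLinearMap.one_apply, aUt]
      rw [show (4 * m + 3 + 2 : ℤ) = 4 * (m + 1) + 1 from by ring, aT1, aT3, ht2e]
      simp only [map_zero, add_zero]
  exact ⟨fun k => ⟨ht1e k, ht1o k, ht2e k, ht2o k⟩, h2, h3, h4, h5⟩
end

section
/- In the canonical representation of Q₂ on ℓ²(ℤ) (U e_k = e_{k+1}, S₂ e_k = e_{2k}, S₁ = U S₂), the operators T₁ = S₂ S₁ S₁* + S₁ S₂ S₂* and T₂ = S₂² S₁* + S₁² S₂* (the images of the Cuntz generators under the endomorphism ρ₁₃₄ of O₂) act on the basis by T₁ e_{2k} = e_{4k+1}, T₁ e_{2k+1} = e_{4k+2}, T₂ e_{2k} = e_{4k+3}, T₂ e_{2k+1} = e_{4k} for all k ∈ ℤ. Consequently both T₁ and T₂ are pure isometries, i.e. the index maps k ↦ (index of T_i e_k) have empty intersection of the images of their iterates over ℤ. -/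
open ContinuousLinearMap

section aux

local notation "H" => lp (fun _ : ℤ => ℂ) 2

lemma coeff_eq (x : H) (k : ℤ) : (inner ℂ (e k) x : ℂ) = x k := by
  simp [e, lp.inner_single_left]

lemma inner_e_e (a b : ℤ) : (inner ℂ (e a) (e b) : ℂ) = if a = b then 1 else 0 := by
  rw [coeff_eq]
  simp [e, lp.single_apply, Pi.single_apply]

lemma ext_of_coeff {x y : H} (h : ∀ k : ℤ, (inner ℂ (e k) x : ℂ) = inner ℂ (e k) y) : x = y := by
  apply lp.ext
  funext k
  have := h k
  rwa [coeff_eq, coeff_eq] at this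

lemma adj_apply_mem {A : H →L[ℂ] H} {f : ℤ → ℤ} (hf : Function.Injective f)
    (hA : ∀ k : ℤ, A (e k) = e (f k)) (m : ℤ) : adjoint A (e (f m)) = e m := by
  apply ext_of_coeff
  intro k
  rw [adjoint_inner_right, hA, inner_e_e, inner_e_e]
  by_cases h : f m = f k
  · rw [if_pos h.symm, if_pos (hf h.symm)]
  · rw [if_neg (fun hc => h hc.symm), if_neg (fun hc => h (by rw [hc]))]

lemma adj_apply_not {A : H →L[ℂ] H} {f : ℤ → ℤ}
    (hA : ∀ k : ℤ, A (e k) = e (f k)) {j : ℤ} (hj : ∀ m, f m ≠ j) :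
    adjoint A (e j) = 0 := by
  apply ext_of_coeff
  intro k
  rw [adjoint_inner_right, hA, inner_e_e, if_neg (hj k), inner_zero_right]

lemma adj_pow_vanish_aux {A : H →L[ℂ] H} {f : ℤ → ℤ}
    (hmem : ∀ m : ℤ, A (e (f m)) = e m)
    (hnot : ∀ j : ℤ, (∀ m, f m ≠ j) → A (e j) = 0)
    (hdec : ∀ m : ℤ, (f m).natAbs ≤ m.natAbs → A (e m) = 0) :
    ∀ N : ℕ, ∀ j : ℤ, j.natAbs = N → ∃ n : ℕ, 1 ≤ n ∧ (A ^ n) (e j) = 0 := by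
  intro N
  induction N using Nat.strong_induction_on with
  | _ N ih =>
  intro j hj
  by_cases hr : ∃ m, f m = j
  · obtain ⟨m, rfl⟩ := hr
    by_cases hlt : m.natAbs < (f m).natAbs
    · obtain ⟨n, hn1, hn⟩ := ih m.natAbs (hj ▸ hlt) m rfl
      exact ⟨n + 1, by omega, by rw [pow_succ, mul_apply_eq_comp, hmem, hn]⟩
    · exact ⟨2, by omega, by rw [pow_two, mul_apply_eq_comp, hmem, hdec m (by omega)]⟩
  · push_neg at hr
    exact ⟨1, le_refl 1, by rw [pow_one, hnot _ hr]⟩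

/-- generic vanishing of powers of the adjoint -/
lemma adj_pow_vanish {A : H →L[ℂ] H} {f : ℤ → ℤ}
    (hmem : ∀ m : ℤ, A (e (f m)) = e m)
    (hnot : ∀ j : ℤ, (∀ m, f m ≠ j) → A (e j) = 0)
    (hdec : ∀ m : ℤ, (f m).natAbs ≤ m.natAbs → A (e m) = 0) :
    ∀ j : ℤ, ∃ n : ℕ, 1 ≤ n ∧ (A ^ n) (e j) = 0 :=
  fun j => adj_pow_vanish_aux hmem hnot hdec j.natAbs j rfl

lemma pure_of_vanish {T : H →L[ℂ] H}
    (hv : ∀ j : ℤ, ∃ n : ℕ, 1 ≤ n ∧ ((adjoint T) ^ n) (e j) = 0) :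
    (⋂ n ∈ Set.Ici 1, Set.range ⇑(T ^ n)) = {0} := by
  ext x
  simp only [Set.mem_iInter, Set.mem_Ici, Set.mem_range, Set.mem_singleton_iff]
  constructor
  · intro hx
    apply ext_of_coeff
    intro j
    obtain ⟨n, hn1, hn⟩ := hv j
    obtain ⟨y, hy⟩ := hx n hn1
    have : (inner ℂ (e j) x : ℂ) = inner ℂ ((adjoint (T ^ n)) (e j)) y := by
      rw [adjoint_inner_left, hy]
    rw [this, ← star_eq_adjoint, star_pow, star_eq_adjoint, hn, inner_zero_left,
      coeff_eq]
    simp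
  · rintro rfl
    exact fun n _ => ⟨0, map_zero _⟩

end aux

set_option maxHeartbeats 1000000 in
/-- In the canonical representation of `Q₂` on `ℓ²(ℤ)`, the images
`T₁ = S₂ S₁ S₁* + S₁ S₂ S₂*` and `T₂ = S₂² S₁* + S₁² S₂*` of the Cuntz generators
under `ρ₁₃₄` act on the basis by `T₁ e_{2k} = e_{4k+1}`, `T₁ e_{2k+1} = e_{4k+2}`,
`T₂ e_{2k} = e_{4k+3}`, `T₂ e_{2k+1} = e_{4k}`; consequently both are pure
isometries. -/
theorem stmt19 (U S₂ S₁ T₁ T₂ : lp (fun _ : ℤ => ℂ) 2 →L[ℂ] lp (fun _ : ℤ => ℂ) 2)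
    (hU : ∀ k : ℤ, U (e k) = e (k + 1))
    (hS₂ : ∀ k : ℤ, S₂ (e k) = e (2 * k))
    (hS₁ : S₁ = U * S₂)
    (hT₁ : T₁ = S₂ * S₁ * adjoint S₁ + S₁ * S₂ * adjoint S₂)
    (hT₂ : T₂ = S₂ ^ 2 * adjoint S₁ + S₁ ^ 2 * adjoint S₂) :
    (∀ k : ℤ, T₁ (e (2 * k)) = e (4 * k + 1) ∧ T₁ (e (2 * k + 1)) = e (4 * k + 2) ∧
      T₂ (e (2 * k)) = e (4 * k + 3) ∧ T₂ (e (2 * k + 1)) = e (4 * k)) ∧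
    (⋂ n ∈ Set.Ici 1, Set.range ⇑(T₁ ^ n)) = {0} ∧
    (⋂ n ∈ Set.Ici 1, Set.range ⇑(T₂ ^ n)) = {0} := by
  have hS₁e : ∀ k : ℤ, S₁ (e k) = e (2 * k + 1) := by
    intro k; rw [hS₁, mul_apply_eq_comp, hS₂, hU]
  -- adjoints of S₁, S₂ on basis vectors
  have hS₂inj : Function.Injective (fun k : ℤ => 2 * k) := fun a b h => by
    simpa using h
  have hS₁inj : Function.Injective (fun k : ℤ => 2 * k + 1) := fun a b h => by
    simp only at h; omega
  have haS₂ : ∀ m : ℤ, adjoint S₂ (e (2 * m)) = e m :=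
    adj_apply_mem hS₂inj hS₂
  have haS₂0 : ∀ j : ℤ, ¬ (2 ∣ j) → adjoint S₂ (e j) = 0 := fun j hj =>
    adj_apply_not hS₂ (fun m hm => hj ⟨m, hm.symm⟩)
  have haS₁ : ∀ m : ℤ, adjoint S₁ (e (2 * m + 1)) = e m :=
    adj_apply_mem hS₁inj hS₁e
  have haS₁0 : ∀ j : ℤ, (2 ∣ j) → adjoint S₁ (e j) = 0 := fun j hj =>
    adj_apply_not hS₁e (fun m hm => by omega)
  -- action of T₁, T₂ on basis vectors
  have main : ∀ k : ℤ, T₁ (e (2 * k)) = e (4 * k + 1) ∧ T₁ (e (2 * k + 1)) = e (4 * k + 2) ∧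
      T₂ (e (2 * k)) = e (4 * k + 3) ∧ T₂ (e (2 * k + 1)) = e (4 * k) := by
    intro k
    refine ⟨?_, ?_, ?_, ?_⟩
    · rw [hT₁, add_apply, mul_apply_eq_comp, mul_apply_eq_comp, mul_apply_eq_comp, mul_apply_eq_comp,
        haS₁0 _ ⟨k, rfl⟩, haS₂ k, map_zero, map_zero, zero_add, hS₂, hS₁e]
      ring_nf
    · rw [hT₁, add_apply, mul_apply_eq_comp, mul_apply_eq_comp, mul_apply_eq_comp, mul_apply_eq_comp,
        haS₁ k, haS₂0 _ (by omega), map_zero, map_zero, add_zero, hS₁e, hS₂]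
      ring_nf
    · rw [hT₂, add_apply, mul_apply_eq_comp, mul_apply_eq_comp, pow_two, pow_two, mul_apply_eq_comp, mul_apply_eq_comp,
        haS₁0 _ ⟨k, rfl⟩, haS₂ k, map_zero, map_zero, zero_add, hS₁e, hS₁e]
      ring_nf
    · rw [hT₂, add_apply, mul_apply_eq_comp, mul_apply_eq_comp, pow_two, pow_two, mul_apply_eq_comp, mul_apply_eq_comp,
        haS₁ k, haS₂0 _ (by omega), map_zero, map_zero, add_zero, hS₂, hS₂]
      ring_nf
  refine ⟨main, ?_, ?_⟩
  -- purity of T₁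
  · set f₁ : ℤ → ℤ := fun k => if 2 ∣ k then 2 * k + 1 else 2 * k with hf₁
    have hT₁e : ∀ k : ℤ, T₁ (e k) = e (f₁ k) := by
      intro k
      rcases Int.even_or_odd k with ⟨m, hm⟩ | ⟨m, hm⟩
      · have := (main m).1
        rw [hf₁]; simp only
        rw [if_pos (by omega), hm, show m + m = 2 * m by ring, this]
        congr 1; ring
      · have := (main m).2.1
        rw [hf₁]; simp only
        rw [if_neg (by omega), hm, this]
        congr 1; ring
    have hf₁inj : Function.Injective f₁ := by
      intro a b h
      rw [hf₁] at h; simp only at h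
      split_ifs at h <;> omega
    apply pure_of_vanish
    apply adj_pow_vanish (f := f₁) (adj_apply_mem hf₁inj hT₁e)
      (fun j hj => adj_apply_not hT₁e hj)
    intro m hm
    exfalso
    rw [hf₁] at hm; simp only at hm
    split_ifs at hm <;> omega
  -- purity of T₂
  · set f₂ : ℤ → ℤ := fun k => if 2 ∣ k then 2 * k + 3 else 2 * k - 2 with hf₂
    have hT₂e : ∀ k : ℤ, T₂ (e k) = e (f₂ k) := by
      intro k
      rcases Int.even_or_odd k with ⟨m, hm⟩ | ⟨m, hm⟩
      · have := (main m).2.2.1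
        rw [hf₂]; simp only
        rw [if_pos (by omega), hm, show m + m = 2 * m by ring, this]
        congr 1; ring
      · have := (main m).2.2.2
        rw [hf₂]; simp only
        rw [if_neg (by omega), hm, this]
        congr 1; ring
    have hf₂inj : Function.Injective f₂ := by
      intro a b h
      rw [hf₂] at h; simp only at h
      split_ifs at h <;> omega
    apply pure_of_vanish
    apply adj_pow_vanish (f := f₂) (adj_apply_mem hf₂inj hT₂e)
      (fun j hj => adj_apply_not hT₂e hj)
    intro m hm
    -- |f₂ m| ≤ |m| only for m ∈ {-2, 1}, neither of which is in the range of f₂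
    have hm2 : m = -2 ∨ m = 1 := by
      rw [hf₂] at hm; simp only at hm
      split_ifs at hm <;> omega
    apply adj_apply_not hT₂e
    intro m' h
    rw [hf₂] at h; simp only at h
    rcases hm2 with rfl | rfl <;> split_ifs at h <;> omega
end
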